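/- If G is a graph of order n with minimum degree δ ≥ 2, then G has a connected δ/3-strong 2-step dominating set S with |S| ≤ 3n/(δ+1) − 2. -/

import Mathlib

open SimpleGraph

/-- A coloring `c` is a rainbow vertex-coloring witness with `k` colors: any two vertices are
joined by a path whose internal vertices have distinct colors, all among the first `k` colors. -/
def IsRainbowVColoring {V : Type*} (G : SimpleGraph V) (c : V → ℕ) (k : ℕ) : Prop :=
  ∀ u v : V, ∃ p : G.Walk u v, p.IsPath ∧ (p.support.tail.dropLast.map c).Nodup ∧
    ∀ w ∈ p.support.tail.dropLast, c w < k

/-- The rainbow vertex-connection number. -/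
noncomputable def rvc {V : Type*} (G : SimpleGraph V) : ℕ :=
  sInf {k : ℕ | ∃ c : V → ℕ, IsRainbowVColoring G c k}

/-! ### Auxiliary machinery -/

/-- A walk contained in `S` yields reachability in the induced subgraph. -/
lemma aux_induce_reach {V : Type*} {G : SimpleGraph V} {S : Set V} :
    ∀ {a b : V} (p : G.Walk a b), (∀ x ∈ p.support, x ∈ S) →
      ∀ (ha : a ∈ S) (hb : b ∈ S), (G.induce S).Reachable ⟨a, ha⟩ ⟨b, hb⟩ := by
  intro a b p
  induction p with
  | nil => intro _ ha hb; rfl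
  | @cons a a' b h q ih =>
    intro hsup ha hb
    have ha' : a' ∈ S := hsup a' (by simp [Walk.support_cons])
    have h1 : (G.induce S).Adj ⟨a, ha⟩ ⟨a', ha'⟩ := h
    exact h1.reachable.trans (ih (fun x hx => hsup x (by simp [Walk.support_cons, hx])) ha' hb)

/-- From a vertex at positive distance, there is a neighbor one step closer. -/
lemma aux_adj_dist_pred {V : Type*} {G : SimpleGraph V} (hG : G.Connected) (s v : V)
    (h : 1 ≤ G.dist s v) : ∃ u, G.Adj v u ∧ G.dist s u + 1 = G.dist s v := by
  obtain ⟨p, hp⟩ := hG.exists_walk_length_eq_dist s v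
  have hq : p.reverse.length = G.dist s v := by simpa using hp
  cases hq' : p.reverse with
  | nil => rw [hq'] at hq; simp at hq h <;> omega
  | @cons _ u _ hadj r =>
    rw [hq'] at hq
    simp [Walk.length_cons] at hq
    have h1 : G.dist u s ≤ r.length := SimpleGraph.dist_le r
    have h2 : G.dist s u ≤ r.length := by rwa [SimpleGraph.dist_comm] at h1
    have h3 : G.dist s v ≤ G.dist s u + G.dist u v := hG.dist_triangle
    have h4 : G.dist u v ≤ 1 := by
      rw [SimpleGraph.dist_comm]
      exact le_of_eq (SimpleGraph.dist_eq_one_iff_adj.mpr hadj)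
    exact ⟨u, hadj, by omega⟩

/-- Descend to a vertex whose minimum distance to `D` is exactly 3. -/
lemma aux_descend {V : Type*} {G : SimpleGraph V} (hG : G.Connected) (D : Set V) :
    ∀ m (v : V), (∀ s ∈ D, m ≤ G.dist s v) → (∃ s ∈ D, G.dist s v = m) → 3 ≤ m →
      ∃ u, (∀ s ∈ D, 3 ≤ G.dist s u) ∧ ∃ s ∈ D, G.dist s u = 3 := by
  intro m
  induction m using Nat.strong_induction_on with
  | _ m ih =>
    intro v hmin ⟨s0, hs0, hs0v⟩ hm3
    rcases eq_or_lt_of_le hm3 with h3 | h4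
    · exact ⟨v, fun s hs => h3 ▸ hmin s hs, s0, hs0, h3 ▸ hs0v⟩
    · obtain ⟨u, huv, hu⟩ := aux_adj_dist_pred hG s0 v (by omega)
      have hminu : ∀ s ∈ D, m - 1 ≤ G.dist s u := by
        intro s hs
        have h1 : G.dist s v ≤ G.dist s u + G.dist u v := hG.dist_triangle
        have h2 : G.dist u v ≤ 1 := by
          rw [SimpleGraph.dist_comm]
          exact le_of_eq (SimpleGraph.dist_eq_one_iff_adj.mpr huv)
        have := hmin s hs
        omega
      exact ih (m - 1) (by omega) u hminu ⟨s0, hs0, by omega⟩ (by omega)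

lemma aux_ncard_nbhd {V : Type*} [Fintype V] (G : SimpleGraph V) [DecidableRel G.Adj] (v : V) :
    (insert v (G.neighborSet v)).ncard = G.degree v + 1 := by
  rw [Set.ncard_insert_of_notMem (by simp) (Set.toFinite _)]
  congr 1
  rw [← Nat.card_coe_set_eq, Nat.card_eq_fintype_card, card_neighborSet_eq_degree]

/-- The closed 1-ball around a set. -/
def auxBall {V : Type*} (G : SimpleGraph V) (D : Set V) : Set V :=
  {w | ∃ s ∈ D, G.dist s w ≤ 1}

/-- Invariant maintained by the greedy construction. -/
def auxGood {V : Type*} (G : SimpleGraph V) (δ : ℕ) (D : Set V) : Prop :=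
  D.Nonempty ∧ (∃ r ∈ D, ∀ v ∈ D, ∃ p : G.Walk v r, ∀ x ∈ p.support, x ∈ D) ∧
    (δ + 1) * (D.ncard + 2) ≤ 3 * (auxBall G D).ncard

lemma aux_ball_mono {V : Type*} (G : SimpleGraph V) {D D' : Set V} (h : D ⊆ D') :
    auxBall G D ⊆ auxBall G D' := by
  rintro w ⟨s, hs, hsw⟩; exact ⟨s, h hs, hsw⟩

lemma aux_nbhd_subset_ball {V : Type*} (G : SimpleGraph V) {D : Set V} {v : V} (hv : v ∈ D) :
    insert v (G.neighborSet v) ⊆ auxBall G D := by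
  rintro w (rfl | hw)
  · exact ⟨w, hv, by rw [SimpleGraph.dist_self]; omega⟩
  · exact ⟨v, hv, le_of_eq (SimpleGraph.dist_eq_one_iff_adj.mpr hw)⟩

/-- Extension step when a vertex is at minimum distance exactly 3. -/
lemma aux_extendA {V : Type*} [Fintype V] (G : SimpleGraph V) [DecidableRel G.Adj]
    (hG : G.Connected) (δ : ℕ) (hdeg : ∀ v, δ ≤ G.degree v) (D : Set V)
    (hD : auxGood G δ D) (u : V) (hmin : ∀ s ∈ D, 3 ≤ G.dist s u)
    (hex : ∃ s ∈ D, G.dist s u = 3) :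
    ∃ D', auxGood G δ D' ∧ D.ncard < D'.ncard := by
  obtain ⟨s, hs, hsu⟩ := hex
  obtain ⟨y, huy, hy⟩ := aux_adj_dist_pred hG s u (by omega)
  obtain ⟨x, hyx, hx⟩ := aux_adj_dist_pred hG s y (by omega)
  have hsx : G.Adj x s := (SimpleGraph.dist_eq_one_iff_adj.mp (by omega)).symm
  set D' : Set V := insert u (insert y (insert x D)) with hD'def
  have hsub : D ⊆ D' := fun w hw => by simp [hD'def, hw]
  have huD : u ∉ D := fun h => by
    have := hmin u h; rw [SimpleGraph.dist_self] at this; omega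
  obtain ⟨hne, ⟨r, hr, hroot⟩, hcard⟩ := hD
  have hdisj : Disjoint (auxBall G D) (insert u (G.neighborSet u)) := by
    rw [Set.disjoint_right]
    rintro w (rfl | hw) ⟨t, ht, htw⟩
    · have := hmin t ht; omega
    · have h1 : G.dist t u ≤ G.dist t w + G.dist w u := hG.dist_triangle
      have h2 : G.dist w u ≤ 1 :=
        le_of_eq (SimpleGraph.dist_eq_one_iff_adj.mpr (by exact hw.symm))
      have := hmin t ht; omega
  have hunion : auxBall G D ∪ insert u (G.neighborSet u) ⊆ auxBall G D' :=
    Set.union_subset (aux_ball_mono G hsub)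
      (aux_nbhd_subset_ball G (by simp [hD'def]))
  have hb' : (auxBall G D).ncard + (δ + 1) ≤ (auxBall G D').ncard := by
    have h1 := Set.ncard_union_eq hdisj (Set.toFinite _) (Set.toFinite _)
    have h2 := Set.ncard_le_ncard hunion (Set.toFinite _)
    have h3 : δ + 1 ≤ (insert u (G.neighborSet u)).ncard := by
      rw [aux_ncard_nbhd]; exact Nat.add_le_add_right (hdeg u) 1
    omega
  have hcard' : D'.ncard ≤ D.ncard + 3 := by
    calc D'.ncard ≤ (insert y (insert x D)).ncard + 1 := Set.ncard_insert_le _ _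
      _ ≤ (insert x D).ncard + 1 + 1 := by
          exact Nat.add_le_add_right (Set.ncard_insert_le _ _) 1
      _ ≤ D.ncard + 3 := by
          have := Set.ncard_insert_le x D; omega
  refine ⟨D', ⟨⟨u, by simp [hD'def]⟩, ⟨r, hsub hr, ?_⟩, ?_⟩, ?_⟩
  · obtain ⟨ps, hps⟩ := hroot s hs
    intro v hv
    simp only [hD'def, Set.mem_insert_iff] at hv
    rcases hv with rfl | rfl | rfl | hv
    · refine ⟨Walk.cons huy (Walk.cons hyx (Walk.cons hsx ps)), ?_⟩
      intro w hw
      simp only [Walk.support_cons, List.mem_cons] at hw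
      rcases hw with rfl | rfl | rfl | hw
      · simp [hD'def]
      · simp [hD'def]
      · simp [hD'def]
      · exact hsub (hps w hw)
    · refine ⟨Walk.cons hyx (Walk.cons hsx ps), ?_⟩
      intro w hw
      simp only [Walk.support_cons, List.mem_cons] at hw
      rcases hw with rfl | rfl | hw
      · simp [hD'def]
      · simp [hD'def]
      · exact hsub (hps w hw)
    · refine ⟨Walk.cons hsx ps, ?_⟩
      intro w hw
      simp only [Walk.support_cons, List.mem_cons] at hw
      rcases hw with rfl | hw
      · simp [hD'def]
      · exact hsub (hps w hw)
    · obtain ⟨p, hp⟩ := hroot v hv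
      exact ⟨p, fun w hw => hsub (hp w hw)⟩
  · nlinarith [hcard, hb', hcard']
  · exact Set.ncard_lt_ncard ((Set.ssubset_iff_of_subset hsub).mpr
      ⟨u, by simp [hD'def], huD⟩) (Set.toFinite _)

/-- Extension step when a vertex at minimum distance 2 has few neighbors at distance 1. -/
lemma aux_extendB {V : Type*} [Fintype V] (G : SimpleGraph V) [DecidableRel G.Adj]
    (hG : G.Connected) (δ : ℕ) (hdeg : ∀ v, δ ≤ G.degree v) (D : Set V)
    (hD : auxGood G δ D) (v : V) (hmin : ∀ s ∈ D, 2 ≤ G.dist s v)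
    (hex : ∃ s ∈ D, G.dist s v = 2)
    (hc : 3 * ({w : V | G.Adj v w ∧ ∃ s ∈ D, G.dist s w = 1}.ncard) + 1 ≤ δ) :
    ∃ D', auxGood G δ D' ∧ D.ncard < D'.ncard := by
  obtain ⟨s, hs, hsv⟩ := hex
  obtain ⟨x, hvx, hx⟩ := aux_adj_dist_pred hG s v (by omega)
  have hxs : G.Adj x s := (SimpleGraph.dist_eq_one_iff_adj.mp (by omega)).symm
  set D' : Set V := insert v (insert x D) with hD'def
  have hsub : D ⊆ D' := fun w hw => by simp [hD'def, hw]
  have hvD : v ∉ D := fun h => by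
    have := hmin v h; rw [SimpleGraph.dist_self] at this; omega
  obtain ⟨hne, ⟨r, hr, hroot⟩, hcard⟩ := hD
  set Nv : Set V := insert v (G.neighborSet v) with hNv
  set B : Set V := auxBall G D with hB
  set c : ℕ := {w : V | G.Adj v w ∧ ∃ s ∈ D, G.dist s w = 1}.ncard with hcdef
  have hinter : Nv ∩ B ⊆ {w : V | G.Adj v w ∧ ∃ s ∈ D, G.dist s w = 1} := by
    rintro w ⟨hw1, t, ht, htw⟩
    rcases hw1 with rfl | hw1
    · exact absurd (hmin t ht) (by omega)
    · refine ⟨hw1, t, ht, ?_⟩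
      rcases Nat.lt_or_ge (G.dist t w) 1 with h0 | h1
      · exfalso
        have : t = w := (hG.dist_eq_zero_iff.mp (by omega))
        subst this
        have h2 := hmin t ht
        have h3 : G.dist t v = 1 := SimpleGraph.dist_eq_one_iff_adj.mpr (by exact hw1.symm)
        omega
      · omega
  have hinterle : (Nv ∩ B).ncard ≤ c := Set.ncard_le_ncard hinter (Set.toFinite _)
  have hpart : (Nv ∩ B).ncard + (Nv \ B).ncard = Nv.ncard :=
    Set.ncard_inter_add_ncard_diff_eq_ncard Nv B (Set.toFinite _)
  have hNvcard : δ + 1 ≤ Nv.ncard := by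
    rw [hNv, aux_ncard_nbhd]; exact Nat.add_le_add_right (hdeg v) 1
  have hunion : B ∪ (Nv \ B) ⊆ auxBall G D' :=
    Set.union_subset (aux_ball_mono G hsub)
      ((Set.diff_subset).trans (aux_nbhd_subset_ball G (show v ∈ D' by simp [hD'def])))
  have hb' : B.ncard + (Nv \ B).ncard ≤ (auxBall G D').ncard := by
    have h1 := Set.ncard_union_eq (Set.disjoint_sdiff_right (s := B) (t := Nv))
      (Set.toFinite _) (Set.toFinite _)
    have h2 := Set.ncard_le_ncard hunion (Set.toFinite _)
    omega
  have hkey : B.ncard + (δ + 1) ≤ (auxBall G D').ncard + c := by omega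
  have hcard' : D'.ncard ≤ D.ncard + 2 := by
    have h1 : D'.ncard ≤ (insert x D).ncard + 1 := by
      rw [hD'def]; exact Set.ncard_insert_le _ _
    have h2 := Set.ncard_insert_le x D
    omega
  refine ⟨D', ⟨⟨v, by simp [hD'def]⟩, ⟨r, hsub hr, ?_⟩, ?_⟩, ?_⟩
  · obtain ⟨ps, hps⟩ := hroot s hs
    intro w hw
    simp only [hD'def, Set.mem_insert_iff] at hw
    rcases hw with rfl | rfl | hw
    · refine ⟨Walk.cons hvx (Walk.cons hxs ps), ?_⟩
      intro z hz
      simp only [Walk.support_cons, List.mem_cons] at hz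
      rcases hz with rfl | rfl | hz
      · simp [hD'def]
      · simp [hD'def]
      · exact hsub (hps z hz)
    · refine ⟨Walk.cons hxs ps, ?_⟩
      intro z hz
      simp only [Walk.support_cons, List.mem_cons] at hz
      rcases hz with rfl | hz
      · simp [hD'def]
      · exact hsub (hps z hz)
    · obtain ⟨p, hp⟩ := hroot w hw
      exact ⟨p, fun z hz => hsub (hp z hz)⟩
  · nlinarith [hcard, hkey, hcard', hc]
  · exact Set.ncard_lt_ncard ((Set.ssubset_iff_of_subset hsub).mpr
      ⟨v, by simp [hD'def], hvD⟩) (Set.toFinite _)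

theorem stmt_8 {V : Type*} [Fintype V] (G : SimpleGraph V) [DecidableRel G.Adj]
    (hG : G.Connected) (δ : ℕ) (hδ : G.minDegree = δ) (hδ2 : 2 ≤ δ) :
    ∃ S : Set V,
      -- `S` is a 2-step dominating set
      (∀ v : V, v ∉ S → ∃ s ∈ S, G.dist s v ≤ 2) ∧
      -- `S` is `δ/3`-strong: every vertex at distance exactly 2 from `S` has at least `δ/3`
      -- neighbors at distance exactly 1 from `S`
      (∀ v : V, (∀ s ∈ S, 2 ≤ G.dist s v) → (∃ s ∈ S, G.dist s v = 2) →
        ((δ : ℝ) / 3 ≤ ({w : V | G.Adj v w ∧ ∃ s ∈ S, G.dist s w = 1}.ncard : ℝ))) ∧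
      -- the subgraph induced by `S` is connected
      ((G.induce S).Connected) ∧
      -- size bound
      ((S.ncard : ℝ) ≤ 3 * (Fintype.card V : ℝ) / (δ + 1) - 2) := by
  have hdeg : ∀ v, δ ≤ G.degree v := fun v => hδ ▸ G.minDegree_le_degree v
  obtain ⟨v₀⟩ := hG.nonempty
  -- the singleton is good
  have hsingleton : auxGood G δ {v₀} := by
    refine ⟨⟨v₀, rfl⟩, ⟨v₀, rfl, fun v hv => ?_⟩, ?_⟩
    · rcases hv with rfl
      exact ⟨Walk.nil, by simp⟩
    · have hsubb : insert v₀ (G.neighborSet v₀) ⊆ auxBall G ({v₀} : Set V) :=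
        aux_nbhd_subset_ball G rfl
      have h1 := Set.ncard_le_ncard hsubb (Set.toFinite _)
      rw [aux_ncard_nbhd] at h1
      have h2 := hdeg v₀
      rw [Set.ncard_singleton]
      omega
  -- take a good set of maximal cardinality
  set T : Set ℕ := {m | ∃ D : Set V, auxGood G δ D ∧ D.ncard = m} with hT
  have hTne : T.Nonempty := ⟨_, {v₀}, hsingleton, rfl⟩
  have hTbdd : BddAbove T := by
    refine ⟨Fintype.card V, ?_⟩
    rintro m ⟨D, _, rfl⟩
    calc D.ncard ≤ (Set.univ : Set V).ncard :=
          Set.ncard_le_ncard (Set.subset_univ D) (Set.toFinite _)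
      _ = Fintype.card V := by rw [Set.ncard_univ, Nat.card_eq_fintype_card]
  obtain ⟨D, hD, hDcard⟩ := Nat.sSup_mem hTne hTbdd
  have hmax : ∀ D' : Set V, auxGood G δ D' → D'.ncard ≤ D.ncard := fun D' h =>
    hDcard ▸ le_csSup hTbdd ⟨D', h, rfl⟩
  -- 2-step domination
  have hdom : ∀ v : V, ∃ s ∈ D, G.dist s v ≤ 2 := by
    intro v
    by_contra h
    push_neg at h
    have hmin3 : ∀ s ∈ D, 3 ≤ G.dist s v := fun s hs => by have := h s hs; omega
    obtain ⟨s0, hs0, hs0min⟩ :=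
      Set.exists_min_image D (fun s => G.dist s v) (Set.toFinite _) hD.1
    obtain ⟨u, hu1, hu2⟩ := aux_descend hG D (G.dist s0 v) v
      (fun s hs => hs0min s hs) ⟨s0, hs0, rfl⟩ (hmin3 s0 hs0)
    obtain ⟨D', hD', hlt⟩ := aux_extendA G hG δ hdeg D hD u hu1 hu2
    exact absurd (hmax D' hD') (by omega)
  refine ⟨D, fun v _ => hdom v, ?_, ?_, ?_⟩
  · -- strong property
    intro v h1 h2
    by_contra hcon
    push_neg at hcon
    have hc : 3 * ({w : V | G.Adj v w ∧ ∃ s ∈ D, G.dist s w = 1}.ncard) + 1 ≤ δ := by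
      have h3 : (3 * ({w : V | G.Adj v w ∧ ∃ s ∈ D, G.dist s w = 1}.ncard) : ℝ) < δ := by
        linarith
      have h4 : 3 * ({w : V | G.Adj v w ∧ ∃ s ∈ D, G.dist s w = 1}.ncard) < δ := by
        exact_mod_cast h3
      omega
    obtain ⟨D', hD', hlt⟩ := aux_extendB G hG δ hdeg D hD v h1 h2 hc
    exact absurd (hmax D' hD') (by omega)
  · -- connectivity of the induced subgraph
    obtain ⟨hne', ⟨r, hr, hroot⟩, _⟩ := hD
    haveI : Nonempty ↥D := hne'.to_subtype
    rw [connected_iff]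
    refine ⟨fun a b => ?_, inferInstance⟩
    obtain ⟨pa, hpa⟩ := hroot a a.2
    obtain ⟨pb, hpb⟩ := hroot b b.2
    have ra := aux_induce_reach pa hpa a.2 hr
    have rb := aux_induce_reach pb hpb b.2 hr
    exact ra.trans rb.symm
  · -- size bound
    obtain ⟨_, _, hcard⟩ := hD
    have hball : (auxBall G D).ncard ≤ Fintype.card V := by
      calc (auxBall G D).ncard ≤ (Set.univ : Set V).ncard :=
            Set.ncard_le_ncard (Set.subset_univ _) (Set.toFinite _)
        _ = Fintype.card V := by rw [Set.ncard_univ, Nat.card_eq_fintype_card]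
    have hnat : (δ + 1) * (D.ncard + 2) ≤ 3 * Fintype.card V := by
      calc (δ + 1) * (D.ncard + 2) ≤ 3 * (auxBall G D).ncard := hcard
        _ ≤ 3 * Fintype.card V := by omega
    have hreal : ((δ : ℝ) + 1) * ((D.ncard : ℝ) + 2) ≤ 3 * (Fintype.card V : ℝ) := by
      exact_mod_cast hnat
    have hpos : (0 : ℝ) < (δ : ℝ) + 1 := by positivity
    rw [le_sub_iff_add_le, le_div_iff₀ hpos]
    nlinarith [hreal]
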